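/- Define A(p) = (1/2)·|p(p−1)(2p−1) / ((1+p)(p−2))| for p ∈ [0,1]. Then A attains its maximum on [0,1] exactly at p = φ − √2 and p = 1 − (φ − √2), where φ = (1+√5)/2 is the golden ratio, and the maximum value is (4/3)√2 − (5/6)√5. -/

import Mathlib

open Real

/-- Amplitude of density oscillations for rule 156. -/
noncomputable def A (p : ℝ) : ℝ :=
  (1 / 2) * |p * (p - 1) * (2 * p - 1) / ((1 + p) * (p - 2))|

set_option maxHeartbeats 1000000 in
theorem stmt16 :
    (∀ p ∈ Set.Icc (0 : ℝ) 1, A p ≤ (4 / 3) * Real.sqrt 2 - (5 / 6) * Real.sqrt 5) ∧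
      ∀ p ∈ Set.Icc (0 : ℝ) 1,
        (A p = (4 / 3) * Real.sqrt 2 - (5 / 6) * Real.sqrt 5 ↔
          p = (1 + Real.sqrt 5) / 2 - Real.sqrt 2 ∨
          p = 1 - ((1 + Real.sqrt 5) / 2 - Real.sqrt 2)) := by
  have h2 : Real.sqrt 2 ^ 2 = 2 := Real.sq_sqrt (by norm_num)
  have h5 : Real.sqrt 5 ^ 2 = 5 := Real.sq_sqrt (by norm_num)
  have hs2l : (1.414 : ℝ) ≤ Real.sqrt 2 := by nlinarith [Real.sqrt_nonneg 2]
  have hs2u : Real.sqrt 2 ≤ 1.415 := by nlinarith [Real.sqrt_nonneg 2]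
  have hs5l : (2.236 : ℝ) ≤ Real.sqrt 5 := by nlinarith [Real.sqrt_nonneg 5]
  have hs5u : Real.sqrt 5 ≤ 2.237 := by nlinarith [Real.sqrt_nonneg 5]
  set s2 := Real.sqrt 2 with hs2
  set s5 := Real.sqrt 5 with hs5
  set ps : ℝ := (1 + s5) / 2 - s2 with hps
  set c : ℝ := (8/3) * s2 - (5/3) * s5 with hc
  set r : ℝ := 1/2 + (2/3) * s2 - (1/6) * s5 with hr
  have hc0 : 0 < c := by rw [hc]; linarith
  have hr1 : (1 : ℝ) < r := by rw [hr]; linarith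
  -- key algebraic identities
  have I1 : ∀ p : ℝ, c * ((1 + p) * (2 - p)) - p * (p - 1) * (2 * p - 1)
      = 2 * (p - ps) ^ 2 * (r - p) := by
    intro p
    rw [hc, hps, hr]
    linear_combination (-2/3*p + 1/3 + 5/3*s5 - 4/3*s2) * h2
      + (1/6*p - 1/12 - 2/3*s2 + 1/12*s5) * h5
  have I2 : ∀ p : ℝ, c * ((1 + p) * (2 - p)) + p * (p - 1) * (2 * p - 1)
      = 2 * (p - (1 - ps)) ^ 2 * (p - (1 - r)) := by
    intro p
    rw [hc, hps, hr]
    linear_combination (2/3*p - 1/3 + 5/3*s5 - 4/3*s2) * h2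
      + (-1/6*p + 1/12 - 2/3*s2 + 1/12*s5) * h5
  -- the absolute-value bound
  have habs : ∀ p : ℝ, 0 ≤ p → p ≤ 1 →
      |p * (p - 1) * (2 * p - 1)| ≤ c * ((1 + p) * (2 - p)) := by
    intro p hp0 hp1
    rw [abs_le]
    constructor
    · have h := I2 p
      have hpr : 0 ≤ p - (1 - r) := by linarith
      nlinarith [mul_nonneg (sq_nonneg (p - (1 - ps))) hpr]
    · have h := I1 p
      have hpr : 0 ≤ r - p := by linarith
      nlinarith [mul_nonneg (sq_nonneg (p - ps)) hpr]
  -- rewrite of A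
  have hAeq : ∀ p : ℝ, 0 ≤ p → p ≤ 1 →
      A p = (1/2) * |p * (p - 1) * (2 * p - 1)| / ((1 + p) * (2 - p)) := by
    intro p hp0 hp1
    have hden : (1 + p) * (p - 2) < 0 := by nlinarith
    simp only [A, abs_div, abs_of_neg hden]
    ring
  have hD : ∀ p : ℝ, 0 ≤ p → p ≤ 1 → (0 : ℝ) < (1 + p) * (2 - p) := by
    intro p hp0 hp1; nlinarith
  constructor
  · rintro p ⟨hp0, hp1⟩
    have hDp := hD p hp0 hp1
    rw [hAeq p hp0 hp1, div_le_iff₀ hDp]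
    have h := habs p hp0 hp1
    rw [hc] at h
    nlinarith [h]
  · rintro p ⟨hp0, hp1⟩
    have hDp := hD p hp0 hp1
    constructor
    · intro hEq
      rw [hAeq p hp0 hp1] at hEq
      rw [div_eq_iff (ne_of_gt hDp)] at hEq
      have habsEq : |p * (p - 1) * (2 * p - 1)| = c * ((1 + p) * (2 - p)) := by
        rw [hc]
        linear_combination 2 * hEq
      have hcD : 0 ≤ c * ((1 + p) * (2 - p)) := le_of_lt (mul_pos hc0 hDp)
      rcases (abs_eq hcD).1 habsEq with h | h
      · left
        have h1 := I1 p
        have h2' : 2 * (p - ps) ^ 2 * (r - p) = 0 := by linarith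
        have h3 : (p - ps) ^ 2 * (r - p) = 0 := by linarith
        rcases mul_eq_zero.1 h3 with h4 | h4
        · have := pow_eq_zero_iff (n := 2) (by norm_num) |>.1 h4
          linarith
        · linarith
      · right
        have h1 := I2 p
        have h2' : 2 * (p - (1 - ps)) ^ 2 * (p - (1 - r)) = 0 := by linarith
        have h3 : (p - (1 - ps)) ^ 2 * (p - (1 - r)) = 0 := by linarith
        rcases mul_eq_zero.1 h3 with h4 | h4
        · have := pow_eq_zero_iff (n := 2) (by norm_num) |>.1 h4
          linarith
        · linarith
    · intro hcase
      have hN : |p * (p - 1) * (2 * p - 1)| = c * ((1 + p) * (2 - p)) := by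
        rcases hcase with h | h
        · have h1 := I1 p
          rw [h] at h1 ⊢
          have h1' : c * ((1 + ps) * (2 - ps)) - ps * (ps - 1) * (2 * ps - 1) = 0 := by
            rw [h1]; ring
          have : ps * (ps - 1) * (2 * ps - 1) = c * ((1 + ps) * (2 - ps)) := by linarith
          rw [this]
          exact abs_of_nonneg (le_of_lt (mul_pos hc0 (hD ps (by rw [← h]; exact hp0) (by rw [← h]; exact hp1))))
        · have h1 := I2 p
          rw [h] at h1 ⊢
          have h1' : c * ((1 + (1 - ps)) * (2 - (1 - ps))) + (1 - ps) * ((1 - ps) - 1) * (2 * (1 - ps) - 1) = 0 := by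
            rw [h1]; ring
          have : (1 - ps) * ((1 - ps) - 1) * (2 * (1 - ps) - 1) = -(c * ((1 + (1 - ps)) * (2 - (1 - ps)))) := by linarith
          rw [this, abs_neg]
          exact abs_of_nonneg (le_of_lt (mul_pos hc0 (hD (1 - ps) (by rw [← h]; exact hp0) (by rw [← h]; exact hp1))))
      rw [hAeq p hp0 hp1, hN]
      rw [hc]
      rw [mul_div_assoc, mul_div_cancel_right₀ _ hDp.ne']
      ring
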